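/- Let α = 0, μ(t) = 2/t, β(t) = t/2, and ζ_W(φ,t) = Σ_{ℓ=1}^∞ (e^{−μ(t)}/(1−e^{−μ(t)})) (μ(t)^ℓ/ℓ!) (1 + β(t)φ/t)^{−ℓ}. Then for every φ ≥ 0, lim_{t→∞} ζ_W(φ,t) = 1/(1 + φ/2). -/

import Mathlib

open Real Filter Topology

lemma expm1_hasSum (x : ℝ) :
    HasSum (fun n : ℕ => x ^ (n + 1) / (Nat.factorial (n + 1))) (Real.exp x - 1) := by
  have h : HasSum (fun n : ℕ => x ^ n / (Nat.factorial n)) (Real.exp x) := by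
    rw [Real.exp_eq_exp_ℝ]
    exact NormedSpace.expSeries_div_hasSum_exp x
  have := (hasSum_nat_add_iff' (f := fun n : ℕ => x ^ n / (Nat.factorial n)) 1).mpr h
  simpa using this

lemma exp_slope : Tendsto (fun x : ℝ => (Real.exp x - 1) / x) (𝓝[≠] (0:ℝ)) (𝓝 1) := by
  have h := hasDerivAt_iff_tendsto_slope.mp (Real.hasDerivAt_exp 0)
  simp only [Real.exp_zero] at h
  refine h.congr' ?_
  filter_upwards [self_mem_nhdsWithin] with x hx
  simp [slope_def_field, div_eq_iff (sub_ne_zero.2 (Set.mem_compl_singleton_iff.mp hx))]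

theorem critical_yaglom_limit (μ β : ℝ → ℝ)
    (hμ : ∀ t : ℝ, μ t = 2 / t) (hβ : ∀ t : ℝ, β t = t / 2)
    (ζW : ℝ → ℝ → ℝ)
    (hζW : ∀ φ t : ℝ, ζW φ t =
      ∑' ℓ : ℕ, Real.exp (-(μ t)) / (1 - Real.exp (-(μ t))) *
        (μ t) ^ (ℓ + 1) / (Nat.factorial (ℓ + 1)) *
          (1 + β t * φ / t) ^ (-((ℓ : ℝ) + 1))) :
    ∀ φ : ℝ, 0 ≤ φ →
      Tendsto (fun t => ζW φ t) atTop (𝓝 (1 / (1 + φ / 2))) := by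
  intro φ hφ
  set r : ℝ := 1 + φ / 2 with hr_def
  have hr : 0 < r := by dsimp [r]; linarith
  clear_value r
  set g : ℝ → ℝ := fun m => Real.exp (-m) / (1 - Real.exp (-m)) * (Real.exp (m / r) - 1)
    with hg_def
  -- three elementary limits
  have h1 : Tendsto (fun m : ℝ => Real.exp (-m)) (𝓝[≠] (0:ℝ)) (𝓝 1) := by
    have : Tendsto (fun m : ℝ => Real.exp (-m)) (𝓝 (0:ℝ)) (𝓝 (Real.exp (-0))) :=
      (Real.continuous_exp.comp continuous_neg).tendsto 0
    simpa using this.mono_left nhdsWithin_le_nhds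
  have h2 : Tendsto (fun m : ℝ => (Real.exp (m / r) - 1) / m) (𝓝[≠] (0:ℝ)) (𝓝 (1/r)) := by
    have hcomp : Tendsto (fun m : ℝ => m / r) (𝓝[≠] (0:ℝ)) (𝓝[≠] (0:ℝ)) := by
      rw [tendsto_nhdsWithin_iff]
      constructor
      · have : Tendsto (fun m : ℝ => m / r) (𝓝 (0:ℝ)) (𝓝 (0 / r)) :=
          (continuous_id.div_const r).tendsto 0
        simpa using this.mono_left nhdsWithin_le_nhds
      · filter_upwards [self_mem_nhdsWithin] with m hm
        exact div_ne_zero (Set.mem_compl_singleton_iff.mp hm) hr.ne'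
    have h : Tendsto (fun m : ℝ => (Real.exp (m / r) - 1) / (m / r) / r)
        (𝓝[≠] (0:ℝ)) (𝓝 (1 / r)) := by
      have := (exp_slope.comp hcomp).div_const r
      simpa [Function.comp] using this
    refine h.congr' ?_
    filter_upwards [self_mem_nhdsWithin] with m hm
    have hm0 : m ≠ 0 := Set.mem_compl_singleton_iff.mp hm
    rw [div_div, div_mul_cancel₀ _ hr.ne']
  have h3 : Tendsto (fun m : ℝ => m / (1 - Real.exp (-m))) (𝓝[≠] (0:ℝ)) (𝓝 1) := by
    have hneg : Tendsto (fun m : ℝ => -m) (𝓝[≠] (0:ℝ)) (𝓝[≠] (0:ℝ)) := by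
      rw [tendsto_nhdsWithin_iff]
      constructor
      · have : Tendsto (fun m : ℝ => -m) (𝓝 (0:ℝ)) (𝓝 (-0:ℝ)) :=
          (continuous_neg (G := ℝ)).tendsto 0
        simpa using this.mono_left nhdsWithin_le_nhds
      · filter_upwards [self_mem_nhdsWithin] with m hm
        exact neg_ne_zero.mpr (Set.mem_compl_singleton_iff.mp hm)
    have h : Tendsto (fun m : ℝ => -m / (Real.exp (-m) - 1)) (𝓝[≠] (0:ℝ)) (𝓝 1) := by
      have := (exp_slope.comp hneg).inv₀ one_ne_zero
      simpa [Function.comp, inv_div] using this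
    refine h.congr' ?_
    filter_upwards [self_mem_nhdsWithin] with m hm
    rw [show (1:ℝ) - Real.exp (-m) = -(Real.exp (-m) - 1) by ring, div_neg, ← neg_div]
  -- the limit of g
  have hg : Tendsto g (𝓝[≠] (0:ℝ)) (𝓝 (1/r)) := by
    have hprod := (h1.mul h2).mul h3
    rw [show (1:ℝ) * (1/r) * 1 = 1/r by ring] at hprod
    refine hprod.congr' ?_
    filter_upwards [self_mem_nhdsWithin] with m hm
    have hm0 : m ≠ 0 := Set.mem_compl_singleton_iff.mp hm
    simp only [hg_def]
    field_simp
  -- composition with t ↦ 2/t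
  have hμt : Tendsto (fun t : ℝ => 2 / t) atTop (𝓝[≠] (0:ℝ)) := by
    rw [tendsto_nhdsWithin_iff]
    constructor
    · exact tendsto_const_nhds.div_atTop tendsto_id
    · filter_upwards [eventually_gt_atTop (0:ℝ)] with t ht
      have : (0:ℝ) < 2 / t := by positivity
      exact this.ne'
  have key : Tendsto (fun t : ℝ => g (2 / t)) atTop (𝓝 (1/r)) := hg.comp hμt
  refine key.congr' ?_
  filter_upwards [eventually_gt_atTop (0:ℝ)] with t ht
  have ht0 : t ≠ 0 := ht.ne'
  have hm : (0:ℝ) < 2 / t := by positivity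
  have hbase : 1 + β t * φ / t = r := by
    rw [hβ, hr_def]
    field_simp
  have hterm : ∀ ℓ : ℕ,
      Real.exp (-(μ t)) / (1 - Real.exp (-(μ t))) * (μ t) ^ (ℓ + 1) /
          (Nat.factorial (ℓ + 1)) * (1 + β t * φ / t) ^ (-((ℓ : ℝ) + 1))
      = Real.exp (-(2/t)) / (1 - Real.exp (-(2/t))) *
          ((2/t / r) ^ (ℓ + 1) / (Nat.factorial (ℓ + 1))) := by
    intro ℓ
    rw [hbase, hμ t,
      show -((ℓ:ℝ)+1) = -(((ℓ+1:ℕ)):ℝ) by push_cast; ring,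
      Real.rpow_neg hr.le, Real.rpow_natCast, div_pow]
    have hfac : ((Nat.factorial (ℓ+1)) : ℝ) ≠ 0 :=
      Nat.cast_ne_zero.mpr (Nat.factorial_ne_zero _)
    simp only [div_eq_mul_inv]
    ring
  have hval : ζW φ t = g (2/t) := by
    rw [hζW, tsum_congr hterm, hg_def]
    exact ((expm1_hasSum (2/t / r)).mul_left
      (Real.exp (-(2/t)) / (1 - Real.exp (-(2/t))))).tsum_eq
  exact hval.symm
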